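/- Let X̃ be a vector field on a matrix Lie group G satisfying the cocycle property X̃(hg) = h X̃(g) + X̃(h) g, and suppose X̃ is differentiable at e. Then for the error f = e + ϑ + O(‖ϑ‖²) with ϑ ∈ 𝔤, the first-order expansion of the error equation ḟ = X̃(f) + fζ − ζf about f = e is ϑ̇ = DX̃(e)·ϑ + [ϑ, ζ], i.e., the linearized error dynamics ϑ̇ = DX̃(e)·ϑ + ad_ϑ ζ depend only on ζ and the derivative of X̃ at the identity, not on the state trajectory. -/

import Mathlib

open Matrix

attribute [local instance] Matrix.linftyOpNormedRing Matrix.linftyOpNormedAlgebra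

/-- Linearization of the invariant error dynamics: if `X̃` satisfies the cocycle
property and is differentiable at `e` with derivative `D`, then the map
`ϑ ↦ X̃(e+ϑ) + (e+ϑ)ζ − ζ(e+ϑ)` vanishes at `ϑ = 0` and its first-order expansion at
`ϑ = 0` is `ϑ ↦ DX̃(e)·ϑ + ϑζ − ζϑ = DX̃(e)·ϑ + ad_ϑ ζ`, depending only on `ζ` and the
derivative of `X̃` at the identity, not on the state trajectory. -/
theorem linearized_error_dynamics (n : ℕ) (G : Set (Matrix (Fin n) (Fin n) ℝ))
    (hone : (1 : Matrix (Fin n) (Fin n) ℝ) ∈ G)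
    (hmul : ∀ a ∈ G, ∀ b ∈ G, a * b ∈ G)
    (Xt : Matrix (Fin n) (Fin n) ℝ → Matrix (Fin n) (Fin n) ℝ)
    (ζ : Matrix (Fin n) (Fin n) ℝ)
    (hcoc : ∀ g ∈ G, ∀ h ∈ G, Xt (h * g) = h * Xt g + Xt h * g)
    (D : Matrix (Fin n) (Fin n) ℝ →L[ℝ] Matrix (Fin n) (Fin n) ℝ)
    (hD : HasFDerivAt Xt D 1) :
    (Xt (1 + 0) + (1 + 0) * ζ - ζ * (1 + 0) = 0) ∧
      HasFDerivAt (fun ϑ => Xt (1 + ϑ) + (1 + ϑ) * ζ - ζ * (1 + ϑ))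
        (@HAdd.hAdd _ _ _ instHAdd D ((ContinuousLinearMap.mul ℝ (Matrix (Fin n) (Fin n) ℝ)).flip ζ
          - ContinuousLinearMap.mul ℝ (Matrix (Fin n) (Fin n) ℝ) ζ)) 0 := by
  have hXe : Xt 1 = 0 := by
    have := hcoc 1 hone 1 hone
    simp only [one_mul, mul_one] at this
    have h2 : Xt 1 = Xt 1 + Xt 1 := by simpa using this
    exact add_left_cancel (h2.symm.trans (add_zero (Xt 1)).symm)
  constructor
  · simp [hXe]
  · have haff : HasFDerivAt (fun ϑ : Matrix (Fin n) (Fin n) ℝ => 1 + ϑ)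
        (ContinuousLinearMap.id ℝ (Matrix (Fin n) (Fin n) ℝ)) 0 :=
      (hasFDerivAt_id 0).const_add 1
    have hD' : HasFDerivAt Xt D ((fun ϑ : Matrix (Fin n) (Fin n) ℝ => 1 + ϑ) 0) := by
      simpa using hD
    have h1 : HasFDerivAt (fun ϑ => Xt (1 + ϑ)) D 0 := by
      exact hD'.comp 0 haff
    have h2 : HasFDerivAt (fun ϑ : Matrix (Fin n) (Fin n) ℝ => (1 + ϑ) * ζ)
        ((ContinuousLinearMap.mul ℝ (Matrix (Fin n) (Fin n) ℝ)).flip ζ) 0 := by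
      have := (((ContinuousLinearMap.mul ℝ (Matrix (Fin n) (Fin n) ℝ)).flip ζ).hasFDerivAt
        (x := 0)).const_add ζ
      convert this using 2 with x
      case e'_11 => simp [add_mul]
      all_goals rfl
    have h3 : HasFDerivAt (fun ϑ : Matrix (Fin n) (Fin n) ℝ => ζ * (1 + ϑ))
        (ContinuousLinearMap.mul ℝ (Matrix (Fin n) (Fin n) ℝ) ζ) 0 := by
      have := ((ContinuousLinearMap.mul ℝ (Matrix (Fin n) (Fin n) ℝ) ζ).hasFDerivAt
        (x := 0)).const_add ζ
      convert this using 2 with x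
      case e'_11 => simp [mul_add]
      all_goals rfl
    convert (h1.add h2).sub h3 using 1
    case e'_11 => rfl
    case e'_12 => exact heq_of_eq (add_sub_assoc _ _ _).symm
    all_goals rfl
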